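/- Let δ ≥ 4 be even, K₁ ≤ δ/2, and consider the antipodal constraint that every triangle with one side δ has its other two sides x, y satisfying x + y = δ. Then the map sending a triangle (a,b,c) with a,b,c ≤ δ−1 to its antipodal companion (a, δ−b, δ−c) (reflecting through one vertex) maps allowed triangles of the class A^{δ−1}_{K₁, δ−K₁, 2δ+2, 2δ+1} to allowed triangles: (a,b,c) is metric with odd perimeter p satisfying 2K₁ < p < 2(δ−K₁) + 2min(a,b,c) and p ≤ 2δ−1, if and only if (a, δ−b, δ−c) has the same properties. -/
import Mathlib


/-- The triangle `(a,b,c)` is allowed in the class `A^{δ−1}_{K₁,δ−K₁,2δ+2,2δ+1}`: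
metric, with odd perimeter `p` satisfying `2K₁ < p < 2(δ−K₁) + 2·min(a,b,c)` and
`p ≤ 2δ − 1`. -/
def AllowedAnti (δ K₁ a b c : ℕ) : Prop :=
  (a ≤ b + c ∧ b ≤ a + c ∧ c ≤ a + b) ∧
  Odd (a + b + c) ∧
  2 * K₁ < a + b + c ∧
  a + b + c < 2 * (δ - K₁) + 2 * min a (min b c) ∧
  a + b + c ≤ 2 * δ - 1

/-- For even `δ ≥ 4` and `K₁ ≤ δ/2`, the antipodal companion map
`(a,b,c) ↦ (a, δ−b, δ−c)` sends allowed triangles of `A^{δ−1}_{K₁,δ−K₁,2δ+2,2δ+1}`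
to allowed triangles and forbidden ones to forbidden ones. -/
theorem stmt15 (δ K₁ : ℕ) (hδ : 4 ≤ δ) (hδe : Even δ) (hK₁ : 1 ≤ K₁)
    (hK : 2 * K₁ ≤ δ)
    (a b c : ℕ) (ha1 : 1 ≤ a) (ha2 : a ≤ δ - 1) (hb1 : 1 ≤ b) (hb2 : b ≤ δ - 1)
    (hc1 : 1 ≤ c) (hc2 : c ≤ δ - 1) :
    AllowedAnti δ K₁ a b c ↔ AllowedAnti δ K₁ a (δ - b) (δ - c) := by
  unfold AllowedAnti
  constructor
  · rintro ⟨hm, ⟨k, hk⟩, h1, h2, h3⟩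
    exact ⟨by omega, ⟨δ + k - b - c, by omega⟩, by omega, by omega, by omega⟩
  · rintro ⟨hm, ⟨k, hk⟩, h1, h2, h3⟩
    exact ⟨by omega, ⟨k + b + c - δ, by omega⟩, by omega, by omega, by omega⟩
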